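/- Let 0 < β < α ≤ 1/2 with 2β ≤ 1 + α, let d ≥ 1, let x : [0,1] → ℝ^d be continuous with ‖x‖_α < ∞, and let A : {(s,t) : 0 ≤ s ≤ t ≤ 1} → ℝ^d ⊗ ℝ^d satisfy |A(s,t)| ≤ K (t − s)^{2α} for all s ≤ t and some K ≥ 0. Let D = (0 = t_0 < ⋯ < t_N = 1) be a subdivision with mesh |D|, and define X(s,t) := ∫_s^t x_{s,u} ⊗ (x^D)'(u) du − A(s,t). Then there is a constant C (depending only on α, β) such that whenever t_i ≤ s < t ≤ t_{i+1} for some i, |X(s,t)| ≤ C (K + ‖x‖_α²) |D|^{2(α − β)} (t − s)^{2β}. -/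

import Mathlib

open MeasureTheory ProbabilityTheory Filter Set

noncomputable section

abbrev Vec (d : ℕ) := EuclideanSpace ℝ (Fin d)
abbrev Ten (d : ℕ) := EuclideanSpace ℝ (Fin d × Fin d)

/-- Elementary tensor `a ⊗ b` of two vectors in `ℝ^d`, realized in `ℝ^{d×d}`
with the Euclidean (Hilbert–Schmidt) norm. -/
def tens {d : ℕ} (a b : Vec d) : Ten d := WithLp.toLp 2 (fun p : Fin d × Fin d => a p.1 * b p.2)

/-- The transposition map `π` with `π (a ⊗ b) = b ⊗ a`. -/
def tswap {d : ℕ} (z : Ten d) : Ten d := WithLp.toLp 2 (fun p : Fin d × Fin d => z (p.2, p.1))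

/-- A subdivision `0 = t₀ < t₁ < ⋯ < t_N = 1` of `[0,1]`. -/
structure Subdivision : Type where
  N : ℕ
  pos : 0 < N
  t : ℕ → ℝ
  zero : t 0 = 0
  last : t N = 1
  mono : ∀ i, i < N → t i < t (i + 1)

/-- The mesh `|D|` of a subdivision. -/
def Subdivision.mesh (D : Subdivision) : ℝ :=
  (Finset.range D.N).sup' (Finset.nonempty_range_iff.mpr D.pos.ne')
    (fun i => D.t (i + 1) - D.t i)

/-- `xD` is the piecewise linear interpolation of `x` along `D`. -/
def IsPL {d : ℕ} (D : Subdivision) (x xD : ℝ → Vec d) : Prop :=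
  ∀ i, i < D.N → ∀ u ∈ Icc (D.t i) (D.t (i + 1)),
    xD u = x (D.t i) + ((u - D.t i) / (D.t (i + 1) - D.t i)) • (x (D.t (i + 1)) - x (D.t i))

/-- `xD'` is the (piecewise constant) derivative of the piecewise linear
interpolation of `x` along `D`. -/
def IsPLDeriv {d : ℕ} (D : Subdivision) (x xD' : ℝ → Vec d) : Prop :=
  ∀ i, i < D.N → ∀ u ∈ Ioo (D.t i) (D.t (i + 1)),
    xD' u = (D.t (i + 1) - D.t i)⁻¹ • (x (D.t (i + 1)) - x (D.t i))

/-- `B` is a standard `d`-dimensional Brownian motion on `[0,1]`: a.s. continuous paths,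
`B 0 = 0`, and the coordinates of all increments over `[0,1]` are jointly independent
centered Gaussians, the coordinates of the increment over `[s,t]` having variance `t - s`.
(Equivalently, the `d` coordinate processes are independent centered Gaussian processes
with covariance `min s t`.) -/
structure IsBrownian (d : ℕ) {Ω : Type*} [MeasurableSpace Ω] (P : Measure Ω)
    (B : ℝ → Ω → Vec d) : Prop where
  meas : ∀ t, Measurable (B t)
  cont : ∀ᵐ ω ∂P, ContinuousOn (fun t => B t ω) (Icc 0 1)
  init : ∀ᵐ ω ∂P, B 0 ω = 0
  incr : ∀ s t : ℝ, 0 ≤ s → s ≤ t → t ≤ 1 → ∀ i : Fin d,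
    Measure.map (fun ω => B t ω i - B s ω i) P = gaussianReal 0 (Real.toNNReal (t - s))
  indep : ∀ (n : ℕ) (τ : ℕ → ℝ), Monotone τ → (∀ k, τ k ∈ Icc (0 : ℝ) 1) →
    iIndepFun
      (fun p : Fin n × Fin d => fun ω => B (τ (p.1.val + 1)) ω p.2 - B (τ p.1.val) ω p.2) P

lemma norm_tens {d : ℕ} (a b : Vec d) : ‖tens a b‖ = ‖a‖ * ‖b‖ := by
  simp only [EuclideanSpace.norm_eq, tens]
  rw [← Real.sqrt_mul (by positivity)]
  congr 1
  rw [Fintype.sum_prod_type]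
  simp only [norm_mul, mul_pow]
  rw [← Finset.sum_mul_sum]

lemma Subdivision.t_mono (D : Subdivision) {j k : ℕ} (hjk : j ≤ k) (hk : k ≤ D.N) :
    D.t j ≤ D.t k := by
  induction k with
  | zero => simp_all
  | succ n ih =>
    rcases Nat.eq_or_lt_of_le hjk with h | h
    · simp [h]
    · exact le_trans (ih (Nat.lt_succ_iff.mp h) (le_trans (Nat.le_succ n) hk))
        (D.mono n (Nat.lt_of_succ_le hk)).le

/-- **Local estimate (3.7)/(3.8) with an abstract second level.**
Let `0 < β < α ≤ 1/2` with `2β ≤ 1 + α`, let `x` have `α`-Hölder seminorm at most `M` on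
`[0,1]`, and let `A` satisfy `|A(s,t)| ≤ K (t−s)^{2α}`. Set
`X(s,t) = ∫_s^t x_{s,u} ⊗ (x^D)'(u) du − A(s,t)`. Then there is `C = C(α,β)` such that
whenever `t_i ≤ s < t ≤ t_{i+1}` for a subdivision interval of `D`,
`|X(s,t)| ≤ C (K + M²) |D|^{2(α−β)} (t−s)^{2β}`. -/
theorem local_defect_estimate (α β : ℝ) (hβ0 : 0 < β) (hβα : β < α) (hα : α ≤ 1 / 2)
    (hβα' : 2 * β ≤ 1 + α) :
    ∃ C : ℝ, ∀ d : ℕ, 1 ≤ d → ∀ (x xD' : ℝ → Vec d) (A : ℝ → ℝ → Ten d)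
      (D : Subdivision) (M K : ℝ),
      ContinuousOn x (Icc 0 1) → 0 ≤ M → 0 ≤ K →
      (∀ s t : ℝ, 0 ≤ s → s < t → t ≤ 1 → ‖x t - x s‖ ≤ M * (t - s) ^ α) →
      (∀ s t : ℝ, 0 ≤ s → s ≤ t → t ≤ 1 → ‖A s t‖ ≤ K * (t - s) ^ (2 * α)) →
      IsPLDeriv D x xD' →
      ∀ i, i < D.N → ∀ s t : ℝ, D.t i ≤ s → s < t → t ≤ D.t (i + 1) →
        ‖(∫ u in s..t, tens (x u - x s) (xD' u)) - A s t‖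
          ≤ C * (K + M ^ 2) * D.mesh ^ (2 * (α - β)) * (t - s) ^ (2 * β) := by
  refine ⟨1, ?_⟩
  intro d hd x xD' A D M K hx hM hK hHol hA hPL i hi s t hs hst ht
  set Δ : ℝ := D.t (i + 1) - D.t i with hΔdef
  have hα0 : 0 < α := lt_trans hβ0 hβα
  have hti0 : 0 ≤ D.t i := by
    rw [← D.zero]; exact D.t_mono (Nat.zero_le i) hi.le
  have hti1 : D.t (i + 1) ≤ 1 := by
    rw [← D.last]; exact D.t_mono hi (le_refl _)
  have hΔpos : 0 < Δ := sub_pos.mpr (D.mono i hi)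
  have hts : 0 < t - s := sub_pos.mpr hst
  have htsΔ : t - s ≤ Δ := by simp only [hΔdef]; linarith
  have hmesh : Δ ≤ D.mesh := Finset.le_sup' (fun j => D.t (j + 1) - D.t j) (Finset.mem_range.mpr hi)
  have hmesh0 : 0 < D.mesh := lt_of_lt_of_le hΔpos hmesh
  have hs0 : 0 ≤ s := le_trans hti0 hs
  have ht1 : t ≤ 1 := le_trans ht hti1
  -- norm of the constant derivative
  set c : Vec d := Δ⁻¹ • (x (D.t (i + 1)) - x (D.t i)) with hc
  have hcnorm : ‖c‖ ≤ M * Δ ^ (α - 1) := by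
    rw [hc, norm_smul, norm_inv, Real.norm_eq_abs, abs_of_pos hΔpos]
    have h1 : ‖x (D.t (i + 1)) - x (D.t i)‖ ≤ M * Δ ^ α :=
      hHol _ _ hti0 (D.mono i hi) hti1
    calc Δ⁻¹ * ‖x (D.t (i + 1)) - x (D.t i)‖ ≤ Δ⁻¹ * (M * Δ ^ α) := by
          exact mul_le_mul_of_nonneg_left h1 (inv_nonneg.mpr hΔpos.le)
      _ = M * Δ ^ (α - 1) := by
          rw [Real.rpow_sub hΔpos, Real.rpow_one]; field_simp
  -- integral bound
  have hIntBound : ‖∫ u in s..t, tens (x u - x s) (xD' u)‖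
      ≤ (M * (t - s) ^ α * (M * Δ ^ (α - 1))) * |t - s| := by
    apply intervalIntegral.norm_integral_le_of_norm_le_const_ae
    have hne : ∀ᵐ u : ℝ, u ≠ t := by
      rw [ae_iff]
      simp only [ne_eq, not_not, setOf_eq_eq_singleton]
      exact measure_singleton t
    filter_upwards [hne] with u hu hmem
    rw [Set.uIoc_of_le hst.le] at hmem
    have hut : u < t := lt_of_le_of_ne hmem.2 hu
    have hux : xD' u = c := hPL i hi u ⟨lt_of_le_of_lt hs hmem.1, lt_of_lt_of_le hut ht⟩
    rw [hux, norm_tens]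
    have h1 : ‖x u - x s‖ ≤ M * (t - s) ^ α := by
      calc ‖x u - x s‖ ≤ M * (u - s) ^ α := hHol s u hs0 hmem.1 (le_trans hmem.2 ht1)
        _ ≤ M * (t - s) ^ α := by
            apply mul_le_mul_of_nonneg_left _ hM
            exact Real.rpow_le_rpow (by linarith [hmem.1]) (by linarith) hα0.le
    exact mul_le_mul h1 hcnorm (norm_nonneg _) (by positivity)
  have hIntBound2 : ‖∫ u in s..t, tens (x u - x s) (xD' u)‖
      ≤ M ^ 2 * (Δ ^ (α - 1) * (t - s) ^ (1 + α)) := by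
    refine le_trans hIntBound (le_of_eq ?_)
    rw [abs_of_pos hts, Real.rpow_add hts, Real.rpow_one]
    ring
  -- first term estimate
  have h1 : M ^ 2 * (Δ ^ (α - 1) * (t - s) ^ (1 + α))
      ≤ M ^ 2 * (D.mesh ^ (2 * (α - β)) * (t - s) ^ (2 * β)) := by
    apply mul_le_mul_of_nonneg_left _ (by positivity)
    have e1 : (t - s) ^ (1 + α) = (t - s) ^ (2 * β) * (t - s) ^ (1 + α - 2 * β) := by
      rw [← Real.rpow_add hts]; ring_nf
    have e2 : (t - s) ^ (1 + α - 2 * β) ≤ Δ ^ (1 + α - 2 * β) :=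
      Real.rpow_le_rpow hts.le htsΔ (by linarith)
    have e3 : Δ ^ (α - 1) * Δ ^ (1 + α - 2 * β) = Δ ^ (2 * (α - β)) := by
      rw [← Real.rpow_add hΔpos]; ring_nf
    have e4 : Δ ^ (2 * (α - β)) ≤ D.mesh ^ (2 * (α - β)) :=
      Real.rpow_le_rpow hΔpos.le hmesh (by linarith)
    calc Δ ^ (α - 1) * (t - s) ^ (1 + α)
        = (t - s) ^ (2 * β) * (Δ ^ (α - 1) * (t - s) ^ (1 + α - 2 * β)) := by
          rw [e1]; ring
      _ ≤ (t - s) ^ (2 * β) * (Δ ^ (α - 1) * Δ ^ (1 + α - 2 * β)) := by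
          apply mul_le_mul_of_nonneg_left _ (by positivity)
          exact mul_le_mul_of_nonneg_left e2 (by positivity)
      _ = (t - s) ^ (2 * β) * Δ ^ (2 * (α - β)) := by rw [e3]
      _ ≤ D.mesh ^ (2 * (α - β)) * (t - s) ^ (2 * β) := by
          rw [mul_comm]
          exact mul_le_mul_of_nonneg_right e4 (by positivity)
  -- second term estimate
  have h2 : ‖A s t‖ ≤ K * (D.mesh ^ (2 * (α - β)) * (t - s) ^ (2 * β)) := by
    refine le_trans (hA s t hs0 hst.le ht1) ?_
    apply mul_le_mul_of_nonneg_left _ hK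
    have e1 : (t - s) ^ (2 * α) = (t - s) ^ (2 * (α - β)) * (t - s) ^ (2 * β) := by
      rw [← Real.rpow_add hts]; ring_nf
    rw [e1]
    apply mul_le_mul_of_nonneg_right _ (by positivity)
    exact Real.rpow_le_rpow hts.le (le_trans htsΔ hmesh) (by linarith)
  calc ‖(∫ u in s..t, tens (x u - x s) (xD' u)) - A s t‖
      ≤ ‖∫ u in s..t, tens (x u - x s) (xD' u)‖ + ‖A s t‖ := norm_sub_le _ _
    _ ≤ M ^ 2 * (Δ ^ (α - 1) * (t - s) ^ (1 + α))
        + K * (D.mesh ^ (2 * (α - β)) * (t - s) ^ (2 * β)) := add_le_add hIntBound2 h2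
    _ ≤ M ^ 2 * (D.mesh ^ (2 * (α - β)) * (t - s) ^ (2 * β))
        + K * (D.mesh ^ (2 * (α - β)) * (t - s) ^ (2 * β)) := add_le_add h1 (le_refl _)
    _ = 1 * (K + M ^ 2) * D.mesh ^ (2 * (α - β)) * (t - s) ^ (2 * β) := by ring

end
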